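/- Let p be a prime and K/F a cyclic Galois extension of degree p^n (n ≥ 1) with ξ_p ∈ F, and let K_1 be the intermediate field with [K_1 : F] = p. Suppose (as is furnished by local class field theory when F is a local field) that the quotient group F×/N_{K/F}(K×) is cyclic of order p^n and that the quotient group K_1×/N_{K/K_1}(K×) has order p^{n−1}. If ξ_p ∉ N_{K/F}(K×), then ξ_p ∈ N_{K/K_1}(K×). In particular, under these hypotheses m(K/F) ∈ {−∞, 0}. -/

import Mathlib

private lemma prod_univ_eq_prod_range_pow {G M : Type*} [Group G] [Fintype G] [CommMonoid M]
    (a : G) (h : ∀ g : G, g ∈ Subgroup.zpowers a) (f : G → M) :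
    ∏ g : G, f g = ∏ i ∈ Finset.range (orderOf a), f (a ^ i) := by
  symm
  apply Finset.prod_bij (fun i _ => a ^ i)
  · intro i _; exact Finset.mem_univ _
  · intro i hi j hj hij
    exact pow_injOn_Iio_orderOf (Finset.mem_range.mp hi) (Finset.mem_range.mp hj) hij
  · intro g _
    obtain ⟨k, hk⟩ := mem_powers_iff_mem_zpowers.mpr (h g)
    refine ⟨k % orderOf a, Finset.mem_range.mpr (Nat.mod_lt _ ?_), ?_⟩
    · exact (isOfFinOrder_of_finite a).orderOf_pos
    · rw [pow_mod_orderOf]; exact hk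
  · intro i _; rfl

private lemma prod_subgroup_zpowers_eq {G M : Type*} [Group G] [Fintype G] [CommMonoid M]
    (a : G) (f : G → M) :
    ∏ s : (Subgroup.zpowers a : Subgroup G), f ↑s = ∏ i ∈ Finset.range (orderOf a), f (a ^ i) := by
  have h1 : ∀ s : (Subgroup.zpowers a : Subgroup G),
      s ∈ Subgroup.zpowers (⟨a, Subgroup.mem_zpowers a⟩ : Subgroup.zpowers a) := by
    intro s
    obtain ⟨k, hk⟩ := s.2
    exact ⟨k, Subtype.ext (by simpa using hk)⟩
  have h2 : orderOf (⟨a, Subgroup.mem_zpowers a⟩ : Subgroup.zpowers a) = orderOf a :=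
    Subgroup.orderOf_mk a (Subgroup.mem_zpowers a)
  rw [← h2]
  rw [prod_univ_eq_prod_range_pow _ h1 (fun s => f ↑s)]
  apply Finset.prod_congr rfl
  intro i _
  simp

private lemma prod_range_mul_add' {M : Type*} [CommMonoid M] (p m : ℕ) (hp : 0 < p) (f : ℕ → M) :
    ∏ j ∈ Finset.range p, ∏ i ∈ Finset.range m, f (p * i + j) = ∏ t ∈ Finset.range (p * m), f t := by
  rw [← Finset.prod_product']
  apply Finset.prod_nbij' (fun x => p * x.2 + x.1) (fun t => (t % p, t / p))
  · rintro ⟨j, i⟩ hx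
    simp only [Finset.mem_product, Finset.mem_range] at hx
    simp only [Finset.mem_range]
    calc p * i + j < p * i + p := by omega
      _ = p * (i + 1) := by ring
      _ ≤ p * m := Nat.mul_le_mul_left _ (by omega)
  · intro t ht
    simp only [Finset.mem_range] at ht
    simp only [Finset.mem_product, Finset.mem_range]
    exact ⟨Nat.mod_lt _ hp, Nat.div_lt_of_lt_mul (by omega)⟩
  · rintro ⟨j, i⟩ hx
    simp only [Finset.mem_product, Finset.mem_range] at hx
    have h1 : (p * i + j) % p = j := by
      rw [Nat.mul_add_mod, Nat.mod_eq_of_lt hx.1]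
    have h2 : (p * i + j) / p = i := by
      rw [Nat.mul_add_div hp, Nat.div_eq_of_lt hx.1, Nat.add_zero]
    simp [h1, h2]
  · intro t _
    simp [Nat.div_add_mod]
  · rintro ⟨j, i⟩ _; rfl

private lemma cyclic_exists_pow {G : Type*} [Group G] (hc : IsCyclic G) {p n : ℕ}
    (hp : p.Prime) (hn : 1 ≤ n) (hcard : Nat.card G = p ^ n) (g : G) (hg : g ^ p = 1) :
    ∃ v : G, v ^ (p ^ (n - 1)) = g := by
  have hfin : Finite G := Nat.finite_of_card_ne_zero (by rw [hcard]; exact pow_ne_zero _ hp.pos.ne')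
  have := Fintype.ofFinite G
  obtain ⟨t, ht⟩ := hc.exists_generator
  have hordt : orderOf t = p ^ n := by
    rw [orderOf_eq_card_of_forall_mem_zpowers ht]; exact hcard
  obtain ⟨k, hk⟩ := mem_powers_iff_mem_zpowers.mpr (ht g)
  simp only at hk
  have hdvd : p ^ n ∣ k * p := by
    rw [← hordt]
    apply orderOf_dvd_of_pow_eq_one
    rw [pow_mul, hk, hg]
  have hdvd2 : p ^ (n - 1) ∣ k := by
    have hpn : p ^ n = p ^ (n - 1) * p := by
      rw [← pow_succ]; congr 1; omega
    rw [hpn] at hdvd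
    exact (Nat.mul_dvd_mul_iff_right hp.pos).mp hdvd
  refine ⟨t ^ (k / p ^ (n - 1)), ?_⟩
  rw [← pow_mul, Nat.div_mul_cancel hdvd2, hk]

/-- Let `p` be a prime and `K/F` a cyclic Galois extension of degree
`p^n` (`n ≥ 1`), with `Gal(K/F) = ⟨σ⟩` and `ξ_p = ζ ∈ F` a primitive `p`-th root of
unity, and let `K₁` be the intermediate field with `[K₁ : F] = p` (the fixed field of
`⟨σ^p⟩`).  Suppose (as is furnished by local class field theory when `F` is a local
field) that `F×/N_{K/F}(K×)` is cyclic of order `p^n` and that `K₁×/N_{K/K₁}(K×)`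
has order `p^(n−1)`.  If `ζ ∉ N_{K/F}(K×)`, then `ζ ∈ N_{K/K₁}(K×)`.
(In particular, under these hypotheses `m(K/F) ∈ {−∞, 0}`.) -/
theorem statement6 (p n : ℕ) (hp : p.Prime) (hn : 1 ≤ n)
    (F K : Type) [Field F] [Field K] [Algebra F K] [IsGalois F K]
    (σ : K ≃ₐ[F] K) (hσ : ∀ τ : K ≃ₐ[F] K, τ ∈ Subgroup.zpowers σ)
    (hdeg : Module.finrank F K = p ^ n)
    (ζ : F) (hζ : IsPrimitiveRoot ζ p)
    (K₁ : IntermediateField F K)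
    (hK₁ : K₁ = IntermediateField.fixedField (Subgroup.zpowers (σ ^ p)))
    (hcyc : IsCyclic (Fˣ ⧸ (Units.map (Algebra.norm F : K →* F)).range))
    (hcardF : Nat.card (Fˣ ⧸ (Units.map (Algebra.norm F : K →* F)).range) = p ^ n)
    (hcardK₁ : Nat.card ((↥K₁)ˣ ⧸ (Units.map (Algebra.norm K₁ : K →* K₁)).range)
        = p ^ (n - 1)) :
    (¬ ∃ x : K, Algebra.norm F x = ζ) →
      ∃ x : K, (Algebra.norm K₁ x : K) = algebraMap F K ζ := by
  intro _
  classical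
  haveI : FiniteDimensional F K :=
    FiniteDimensional.of_finrank_pos (by rw [hdeg]; exact pow_pos hp.pos n)
  -- order of σ
  have htop : Subgroup.zpowers σ = ⊤ := by
    rw [Subgroup.eq_top_iff']; exact hσ
  have hord : orderOf σ = p ^ n := by
    have hcard : Nat.card (K ≃ₐ[F] K) = p ^ n := by
      rw [IsGalois.card_aut_eq_finrank, hdeg]
    rw [← Nat.card_zpowers, htop, ← hcard]
    exact Subgroup.card_top
  have hordp : orderOf (σ ^ p) = p ^ (n - 1) := by
    rw [orderOf_pow, hord]
    have hg : Nat.gcd (p ^ n) p = p := Nat.gcd_eq_right (dvd_pow_self p (by omega))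
    rw [hg]
    have hpn : p ^ n = p ^ (n - 1) * p := by rw [← pow_succ]; congr 1; omega
    rw [hpn, Nat.mul_div_cancel _ hp.pos]
  have hfix : K₁.fixingSubgroup = Subgroup.zpowers (σ ^ p) := by
    rw [hK₁]; exact IntermediateField.fixingSubgroup_fixedField _
  -- Key norm compatibility
  have key : ∀ x : K, ∃ z : K,
      algebraMap (↥K₁) K (Algebra.norm (↥K₁) z) = algebraMap F K (Algebra.norm F x) := by
    intro x
    refine ⟨∏ j ∈ Finset.range p, (σ ^ j) x, ?_⟩
    rw [Algebra.norm_eq_prod_automorphisms, Algebra.norm_eq_prod_automorphisms]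
    calc ∏ τ : K ≃ₐ[↥K₁] K, τ (∏ j ∈ Finset.range p, (σ ^ j) x)
        = ∏ τ : K ≃ₐ[↥K₁] K, ∏ j ∈ Finset.range p, τ ((σ ^ j) x) := by
          apply Finset.prod_congr rfl; intro τ _; exact map_prod τ _ _
      _ = ∏ j ∈ Finset.range p, ∏ τ : K ≃ₐ[↥K₁] K, τ ((σ ^ j) x) := Finset.prod_comm
      _ = ∏ j ∈ Finset.range p, ∏ s : K₁.fixingSubgroup, (↑s : K ≃ₐ[F] K) ((σ ^ j) x) := by
          apply Finset.prod_congr rfl; intro j _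
          exact (Fintype.prod_equiv (IntermediateField.fixingSubgroupEquiv K₁).toEquiv
            (fun s => (↑s : K ≃ₐ[F] K) ((σ ^ j) x)) (fun τ => τ ((σ ^ j) x))
            (fun s => rfl)).symm
      _ = ∏ j ∈ Finset.range p, ∏ i ∈ Finset.range (p ^ (n - 1)), ((σ ^ p) ^ i) ((σ ^ j) x) := by
          apply Finset.prod_congr rfl; intro j _
          rw [hfix, ← hordp]
          exact prod_subgroup_zpowers_eq (σ ^ p) (fun g => g ((σ ^ j) x))
      _ = ∏ j ∈ Finset.range p, ∏ i ∈ Finset.range (p ^ (n - 1)), (σ ^ (p * i + j)) x := by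
          apply Finset.prod_congr rfl; intro j _
          apply Finset.prod_congr rfl; intro i _
          rw [pow_add, pow_mul]
          rfl
      _ = ∏ t ∈ Finset.range (p * p ^ (n - 1)), (σ ^ t) x :=
          prod_range_mul_add' p (p ^ (n - 1)) hp.pos (fun t => (σ ^ t) x)
      _ = ∏ t ∈ Finset.range (orderOf σ), (σ ^ t) x := by
          have h1 : p * p ^ (n - 1) = orderOf σ := by
            rw [hord, ← pow_succ']; congr 1; omega
          rw [h1]
      _ = ∏ ρ : K ≃ₐ[F] K, ρ x := (prod_univ_eq_prod_range_pow σ hσ (fun ρ => ρ x)).symm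
  -- now the group-theoretic argument
  have hζ0 : ζ ≠ 0 := hζ.ne_zero hp.ne_zero
  set R : Subgroup Fˣ := (Units.map (Algebra.norm F : K →* F)).range with hR
  set R₁ : Subgroup (↥K₁)ˣ := (Units.map (Algebra.norm (↥K₁) : K →* ↥K₁)).range with hR₁
  set u : Fˣ := Units.mk0 ζ hζ0 with hu
  have hup : u ^ p = 1 := by
    ext; push_cast [hu]; exact hζ.pow_eq_one
  have hgp : ((u : Fˣ ⧸ R)) ^ p = 1 := by
    rw [← QuotientGroup.mk_pow, hup]; rfl
  obtain ⟨v, hv⟩ := cyclic_exists_pow hcyc hp hn hcardF (↑u) hgp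
  obtain ⟨w, hw⟩ := QuotientGroup.mk_surjective v
  have hwm : ((w ^ (p ^ (n - 1)) : Fˣ) : Fˣ ⧸ R) = (u : Fˣ ⧸ R) := by
    rw [QuotientGroup.mk_pow, hw, hv]
  have hmem : (w ^ (p ^ (n - 1)))⁻¹ * u ∈ R := (QuotientGroup.eq).mp hwm
  obtain ⟨k, hk⟩ := hmem
  -- the map q : Fˣ →* quotient of K₁ˣ
  set i : Fˣ →* (↥K₁)ˣ := Units.map (algebraMap F ↥K₁ : F →+* ↥K₁).toMonoidHom with hi
  set q : Fˣ →* ((↥K₁)ˣ ⧸ R₁) := (QuotientGroup.mk' R₁).comp i with hq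
  haveI : Finite ((↥K₁)ˣ ⧸ R₁) :=
    Nat.finite_of_card_ne_zero (by rw [hcardK₁]; exact pow_ne_zero _ hp.pos.ne')
  have hqw : q w ^ (p ^ (n - 1)) = 1 := by
    rw [← hcardK₁]; exact pow_card_eq_one'
  have hqk : q (Units.map (Algebra.norm F : K →* F) k) = 1 := by
    obtain ⟨z, hz⟩ := key (↑k)
    have hzk : algebraMap F ↥K₁ (Algebra.norm F (↑k : K)) = Algebra.norm (↥K₁) z := by
      apply (algebraMap (↥K₁) K).injective
      rw [← IsScalarTower.algebraMap_apply F (↥K₁) K, hz]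
    have hnk : Algebra.norm F (↑k : K) ≠ 0 := Algebra.norm_ne_zero_iff.mpr k.ne_zero
    have hnz : Algebra.norm (↥K₁) z ≠ 0 := by
      rw [← hzk]
      exact fun h => hnk ((algebraMap F ↥K₁).injective (by rw [h, map_zero]))
    have hz0 : z ≠ 0 := Algebra.norm_ne_zero_iff.mp hnz
    rw [hq, MonoidHom.comp_apply, QuotientGroup.mk'_apply, QuotientGroup.eq_one_iff]
    refine ⟨Units.mk0 z hz0, ?_⟩
    ext
    simp only [hi, Units.coe_map, MonoidHom.coe_coe, Units.val_mk0]
    exact congrArg Subtype.val hzk.symm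
  have hqu : q u = 1 := by
    have hueq : u = w ^ (p ^ (n - 1)) * Units.map (Algebra.norm F : K →* F) k := by
      rw [hk]; group
    rw [hueq, map_mul, map_pow, hqw, hqk]
    exact mul_one (1 : (↥K₁)ˣ ⧸ R₁)
  rw [hq, MonoidHom.comp_apply, QuotientGroup.mk'_apply, QuotientGroup.eq_one_iff] at hqu
  obtain ⟨y, hy⟩ := hqu
  refine ⟨(↑y : K), ?_⟩
  have hy' : Algebra.norm (↥K₁) (↑y : K) = algebraMap F ↥K₁ ζ := by
    have hyv := congrArg (Units.val) hy
    simpa [hi, hu] using hyv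
  rw [IsScalarTower.algebraMap_apply F (↥K₁) K, ← hy']
  rfl
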